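/- arXiv:2008.03181 — 3 statements merged into one kernel-verified Lean document; each statement's English description precedes it below -/
import Mathlib

section
/- Let λ, T > 0, let K be a Poisson(λT)-distributed random variable, let (τ_k)_{k≥1} be i.i.d. random variables uniformly distributed on [0,T], and let (A_k)_{k≥1} be i.i.d. real random variables with mean 0 and finite variance σ_A², with K, (τ_k), (A_k) mutually independent. Then for all bounded measurable functions φ₁, φ₂ : ℝ → ℝ, E[(Σ_{k=1}^{K} A_k φ₁(τ_k)) · (Σ_{k=1}^{K} A_k φ₂(τ_k))] = λ σ_A² ∫_0^T φ₁(t) φ₂(t) dt. -/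
open MeasureTheory ProbabilityTheory
open scoped NNReal ENNReal

private lemma cpn_pshift (r : ℝ≥0) (n : ℕ) :
    ((n:ℝ)+1) * poissonPMFReal r (n+1) = r * poissonPMFReal r n := by
  unfold poissonPMFReal
  rw [Nat.factorial_succ]
  push_cast
  have h : ((n:ℝ)+1) ≠ 0 := by positivity
  field_simp
  ring

private lemma cpn_pmean (r : ℝ≥0) :
    HasSum (fun n : ℕ => (n:ℝ) * poissonPMFReal r n) r := by
  have h1 := poissonPMFRealSum r
  have h2 : HasSum (fun n : ℕ => (((n+1 : ℕ)):ℝ) * poissonPMFReal r (n+1)) ((r:ℝ) * 1) := by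
    have : (fun n : ℕ => (((n+1 : ℕ)):ℝ) * poissonPMFReal r (n+1))
        = fun n : ℕ => (r:ℝ) * poissonPMFReal r n := by
      funext n; push_cast; rw [cpn_pshift]
    rw [this]; exact h1.mul_left _
  have := (hasSum_nat_add_iff (f := fun n : ℕ => (n:ℝ) * poissonPMFReal r n) 1).mp h2
  simpa using this

private lemma cpn_psq_summable (r : ℝ≥0) :
    Summable (fun n : ℕ => (n:ℝ)^2 * poissonPMFReal r n) := by
  rw [← summable_nat_add_iff 1]
  have : (fun n : ℕ => ((n+1:ℕ):ℝ)^2 * poissonPMFReal r (n+1))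
      = fun n : ℕ => (r:ℝ) * ((n:ℝ) * poissonPMFReal r n) + (r:ℝ) * poissonPMFReal r n := by
    funext n
    have h := cpn_pshift r n
    push_cast
    nlinarith [h]
  rw [this]
  exact (((cpn_pmean r).summable).mul_left _).add ((poissonPMFRealSum r).summable.mul_left _)

/-- Correlation identity for a compound-Poisson Lévy white noise `w = Σ_k A_k δ(·-τ_k)`
with impulse rate `λ` on `[0,T]` (Proposition 1): if `K` is Poisson(λT)-distributed, the
`(τ_k)` are i.i.d. uniform on `[0,T]`, the `(A_k)` are i.i.d. with mean `0` and finite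
variance `σ_A²`, and `K`, `(τ_k)`, `(A_k)` are mutually independent, then for all bounded
measurable `φ₁ φ₂`,
`E[⟨φ₁,w⟩⟨φ₂,w⟩] = λ σ_A² ∫_0^T φ₁(t) φ₂(t) dt`. -/
theorem compound_poisson_noise_correlation {Ω : Type*} [MeasurableSpace Ω] (P : Measure Ω)
    [IsProbabilityMeasure P] (lam T : ℝ≥0) (hlam : 0 < lam) (hT : 0 < T) (σA : ℝ)
    (K : Ω → ℕ) (τ A : ℕ → Ω → ℝ)
    (hKm : Measurable K) (hτm : ∀ k, Measurable (τ k)) (hAm : ∀ k, Measurable (A k))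
    (hKdist : Measure.map K P = poissonMeasure (lam * T))
    (hτdist : ∀ k, pdf.IsUniform (τ k) (Set.Icc (0 : ℝ) (T : ℝ)) P)
    (hAiid : ∀ k, Measure.map (A k) P = Measure.map (A 0) P)
    (hAint : Integrable (A 0) P) (hAint2 : Integrable (fun ω => (A 0 ω) ^ 2) P)
    (hAmean : ∫ ω, A 0 ω ∂P = 0) (hAvar : ∫ ω, (A 0 ω) ^ 2 ∂P = σA ^ 2)
    (hindep : iIndepFun
      (fun i : Unit ⊕ ℕ ⊕ ℕ =>
        Sum.elim (fun _ : Unit => fun ω => (K ω : ℝ)) (Sum.elim τ A) i) P)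
    (φ₁ φ₂ : ℝ → ℝ) (hφ₁ : Measurable φ₁) (hφ₂ : Measurable φ₂)
    (hφ₁b : ∃ C, ∀ x, |φ₁ x| ≤ C) (hφ₂b : ∃ C, ∀ x, |φ₂ x| ≤ C) :
    ∫ ω, (∑ k ∈ Finset.range (K ω), A k ω * φ₁ (τ k ω))
        * (∑ k ∈ Finset.range (K ω), A k ω * φ₂ (τ k ω)) ∂P
      = lam * σA ^ 2 * ∫ t in (0 : ℝ)..(T : ℝ), φ₁ t * φ₂ t := by
  classical
  obtain ⟨C₁, hC₁⟩ := hφ₁b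
  obtain ⟨C₂, hC₂⟩ := hφ₂b
  have hC₁0 : 0 ≤ C₁ := le_trans (abs_nonneg _) (hC₁ 0)
  have hC₂0 : 0 ≤ C₂ := le_trans (abs_nonneg _) (hC₂ 0)
  set F : (Unit ⊕ ℕ ⊕ ℕ) → Ω → ℝ :=
    fun i => Sum.elim (fun _ : Unit => fun ω => (K ω : ℝ)) (Sum.elim τ A) i with hFdef
  have hFm : ∀ i, Measurable (F i) := by
    rintro (u | m | m)
    · exact measurable_from_top.comp hKm
    · exact hτm m
    · exact hAm m
  -- notation
  set X : ℕ → Ω → ℝ := fun k ω => A k ω * φ₁ (τ k ω) with hXdef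
  set Y : ℕ → Ω → ℝ := fun k ω => A k ω * φ₂ (τ k ω) with hYdef
  set W : ℕ → Ω → ℝ := fun n ω =>
    (∑ k ∈ Finset.range n, X k ω) * (∑ k ∈ Finset.range n, Y k ω) with hWdef
  set e : ℕ → Ω → ℝ := fun n ω => if (K ω : ℝ) = (n : ℝ) then 1 else 0 with hedef
  have hXm : ∀ k, Measurable (X k) := fun k => (hAm k).mul (hφ₁.comp (hτm k))
  have hYm : ∀ k, Measurable (Y k) := fun k => (hAm k).mul (hφ₂.comp (hτm k))
  have hWm : ∀ n, Measurable (W n) := fun n =>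
    (Finset.measurable_sum _ fun k _ => hXm k).mul (Finset.measurable_sum _ fun k _ => hYm k)
  have hem : ∀ n, Measurable (e n) := by
    intro n
    simp only [hedef]
    exact Measurable.ite ((measurable_from_top.comp hKm) (measurableSet_singleton ((n:ℕ):ℝ)))
      measurable_const measurable_const
  -- transfer of the distribution of A 0 to A j
  have hAtrans : ∀ (g : ℝ → ℝ), Measurable g → ∀ j,
      (∫ ω, g (A j ω) ∂P = ∫ ω, g (A 0 ω) ∂P)
      ∧ (Integrable (fun ω => g (A 0 ω)) P → Integrable (fun ω => g (A j ω)) P) := by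
    intro g hg j
    constructor
    · rw [← integral_map (hAm j).aemeasurable hg.aestronglyMeasurable, hAiid j,
        integral_map (hAm 0).aemeasurable hg.aestronglyMeasurable]
    · intro h
      have := (integrable_map_measure hg.aestronglyMeasurable (hAm 0).aemeasurable).mpr h
      rw [← hAiid j] at this
      exact (integrable_map_measure hg.aestronglyMeasurable (hAm j).aemeasurable).mp this
  have hAjint : ∀ j, Integrable (A j) P := fun j =>
    (hAtrans id measurable_id j).2 hAint
  have hAjint2 : ∀ j, Integrable (fun ω => (A j ω)^2) P := fun j =>
    (hAtrans (fun x => x^2) (measurable_id.pow_const 2) j).2 hAint2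
  have hAjmean : ∀ j, ∫ ω, A j ω ∂P = 0 := fun j =>
    (hAtrans id measurable_id j).1.trans hAmean
  have hAjvar : ∀ j, ∫ ω, (A j ω)^2 ∂P = σA ^ 2 := fun j =>
    ((hAtrans (fun x => x^2) (measurable_id.pow_const 2) j).1).trans hAvar
  -- uniform distribution of τ j
  have hτint : ∀ j (g : ℝ → ℝ), Measurable g →
      ∫ ω, g (τ j ω) ∂P = (T:ℝ)⁻¹ * ∫ t in Set.Icc (0:ℝ) (T:ℝ), g t := by
    intro j g hg
    have h1 : ∫ ω, g (τ j ω) ∂P = ∫ x, g x ∂(Measure.map (τ j) P) :=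
      (integral_map (hτm j).aemeasurable hg.aestronglyMeasurable).symm
    rw [h1, hτdist j]
    unfold ProbabilityTheory.cond
    rw [integral_smul_measure, Real.volume_Icc]
    simp only [sub_zero]
    rw [smul_eq_mul, ENNReal.toReal_inv,
      ENNReal.toReal_ofReal (by positivity : (0:ℝ) ≤ (T:ℝ))]
  -- bounded measurable functions are integrable
  have hbd : ∀ (g : Ω → ℝ) (C : ℝ), Measurable g → (∀ ω, |g ω| ≤ C) → Integrable g P := by
    intro g C hg hb
    exact (integrable_const C).mono' hg.aestronglyMeasurable
      (Filter.Eventually.of_forall fun ω => by simpa using hb ω)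
  -- pointwise bound on products
  have key : ∀ (a b u v : ℝ), |u| ≤ C₁ → |v| ≤ C₂ →
      (|a*u|) * (|b*v|) ≤ (C₁*C₂/2)*(a^2+b^2) := by
    intro a b u v hu hv
    rw [abs_mul, abs_mul]
    have h1 : |a| * |u| ≤ |a| *C₁ := mul_le_mul_of_nonneg_left hu (abs_nonneg a)
    have h2 : |b| * |v| ≤ |b| *C₂ := mul_le_mul_of_nonneg_left hv (abs_nonneg b)
    have h3 : (|a| * |u|)*(|b| * |v|) ≤ (|a| *C₁)*(|b| *C₂) :=
      mul_le_mul h1 h2 (by positivity) (by positivity)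
    have h5 : |a| * |b| ≤ (a^2+b^2)/2 := by
      nlinarith [sq_nonneg (|a|-|b|), sq_abs a, sq_abs b]
    have h6 : (|a| *C₁)*(|b| *C₂) = (C₁*C₂)*(|a| * |b|) := by ring
    have h7 : (C₁*C₂)*(|a| * |b|) ≤ (C₁*C₂)*((a^2+b^2)/2) :=
      mul_le_mul_of_nonneg_left h5 (mul_nonneg hC₁0 hC₂0)
    calc |a| * |u| * (|b| * |v|) ≤ (|a| *C₁)*(|b| *C₂) := h3
      _ = (C₁*C₂)*(|a| * |b|) := h6
      _ ≤ (C₁*C₂)*((a^2+b^2)/2) := h7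
      _ = (C₁*C₂/2)*(a^2+b^2) := by ring
  have hprodbd : ∀ j k ω, |X j ω * Y k ω| ≤ (C₁*C₂/2)*((A j ω)^2+(A k ω)^2) := by
    intro j k ω
    rw [abs_mul]
    exact key _ _ _ _ (hC₁ _) (hC₂ _)
  -- the bounding functions
  have hBint : ∀ j k, Integrable (fun ω => (C₁*C₂/2)*((A j ω)^2+(A k ω)^2)) P := fun j k =>
    (((hAjint2 j).add (hAjint2 k)).const_mul _)
  have hBval : ∀ j k, ∫ ω, (C₁*C₂/2)*((A j ω)^2+(A k ω)^2) ∂P = C₁*C₂*σA^2 := by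
    intro j k
    rw [integral_const_mul, integral_add (hAjint2 j) (hAjint2 k), hAjvar j, hAjvar k]
    ring
  have hprod_int : ∀ j k, Integrable (fun ω => X j ω * Y k ω) P := by
    intro j k
    exact (hBint j k).mono' ((hXm j).mul (hYm k)).aestronglyMeasurable
      (Filter.Eventually.of_forall fun ω => by
        rw [Real.norm_eq_abs]; exact hprodbd j k ω)
  -- independence facts
  have hXYindep : ∀ j k, j ≠ k → IndepFun (X j) (Y k) P := by
    intro j k hjk
    have base := hindep.indepFun_prodMk_prodMk hFm
      (Sum.inr (Sum.inl j)) (Sum.inr (Sum.inr j)) (Sum.inr (Sum.inl k)) (Sum.inr (Sum.inr k))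
      (by simp [hjk]) (by simp [hjk]) (by simp [hjk]) (by simp [hjk])
    have h1 : Measurable (fun p : ℝ × ℝ => p.2 * φ₁ p.1) :=
      measurable_snd.mul (hφ₁.comp measurable_fst)
    have h2 : Measurable (fun p : ℝ × ℝ => p.2 * φ₂ p.1) :=
      measurable_snd.mul (hφ₂.comp measurable_fst)
    exact base.comp h1 h2
  have hAτindep : ∀ j, IndepFun (A j) (τ j) P := fun j =>
    hindep.indepFun (show Sum.inr (Sum.inr j) ≠ Sum.inr (Sum.inl j) by simp)
  -- integrability of X, Y and φ∘τ
  have hφ₁τint : ∀ j, Integrable (fun ω => φ₁ (τ j ω)) P := fun j =>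
    hbd _ C₁ (hφ₁.comp (hτm j)) (fun ω => hC₁ _)
  have hφ₂τint : ∀ j, Integrable (fun ω => φ₂ (τ j ω)) P := fun j =>
    hbd _ C₂ (hφ₂.comp (hτm j)) (fun ω => hC₂ _)
  have hXint : ∀ j, Integrable (X j) P := by
    intro j
    refine ((hAjint j).abs.const_mul C₁).mono' (hXm j).aestronglyMeasurable
      (Filter.Eventually.of_forall fun ω => ?_)
    simp only [hXdef, Real.norm_eq_abs, abs_mul]
    calc |A j ω| * |φ₁ (τ j ω)| ≤ |A j ω| * C₁ :=
          mul_le_mul_of_nonneg_left (hC₁ _) (abs_nonneg _)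
      _ = C₁ * |A j ω| := by ring
  have hYint : ∀ j, Integrable (Y j) P := by
    intro j
    refine ((hAjint j).abs.const_mul C₂).mono' (hYm j).aestronglyMeasurable
      (Filter.Eventually.of_forall fun ω => ?_)
    simp only [hYdef, Real.norm_eq_abs, abs_mul]
    calc |A j ω| * |φ₂ (τ j ω)| ≤ |A j ω| * C₂ :=
          mul_le_mul_of_nonneg_left (hC₂ _) (abs_nonneg _)
      _ = C₂ * |A j ω| := by ring
  -- value of the product integrals
  set c : ℝ := (T:ℝ)⁻¹ * ∫ t in Set.Icc (0:ℝ) (T:ℝ), φ₁ t * φ₂ t with hcdef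
  have hprod_val : ∀ j k, ∫ ω, X j ω * Y k ω ∂P = if j = k then σA^2 * c else 0 := by
    intro j k
    rcases eq_or_ne j k with rfl | hjk
    · rw [if_pos rfl]
      have heq : (fun ω => X j ω * Y j ω)
          = fun ω => (A j ω)^2 * (φ₁ (τ j ω) * φ₂ (τ j ω)) := by
        funext ω; simp only [hXdef, hYdef]; ring
      have hind : IndepFun (fun ω => (A j ω)^2) (fun ω => φ₁ (τ j ω) * φ₂ (τ j ω)) P :=
        (hAτindep j).comp (measurable_id.pow_const 2) (hφ₁.mul hφ₂)
      have hint2 : Integrable (fun ω => φ₁ (τ j ω) * φ₂ (τ j ω)) P := by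
        refine hbd _ (C₁*C₂) ((hφ₁.comp (hτm j)).mul (hφ₂.comp (hτm j))) fun ω => ?_
        rw [abs_mul]
        exact mul_le_mul (hC₁ _) (hC₂ _) (abs_nonneg _) hC₁0
      have hmul := hind.integral_fun_mul_eq_mul_integral (hAjint2 j).aestronglyMeasurable hint2.aestronglyMeasurable
      calc ∫ ω, X j ω * Y j ω ∂P
          = ∫ ω, (A j ω)^2 * (φ₁ (τ j ω) * φ₂ (τ j ω)) ∂P := by rw [heq]
        _ = (∫ ω, (A j ω)^2 ∂P) * ∫ ω, φ₁ (τ j ω) * φ₂ (τ j ω) ∂P := hmul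
        _ = σA^2 * c := by
            rw [hAjvar j, hτint j (fun t => φ₁ t * φ₂ t) (hφ₁.mul hφ₂)]
    · rw [if_neg hjk]
      have hmul := (hXYindep j k hjk).integral_fun_mul_eq_mul_integral (hXint j).aestronglyMeasurable (hYint k).aestronglyMeasurable
      have hX0 : ∫ ω, X j ω ∂P = 0 := by
        have hind : IndepFun (A j) (fun ω => φ₁ (τ j ω)) P :=
          (hAτindep j).comp measurable_id hφ₁
        have := hind.integral_fun_mul_eq_mul_integral (hAjint j).aestronglyMeasurable (hφ₁τint j).aestronglyMeasurable
        calc ∫ ω, X j ω ∂P = (∫ ω, A j ω ∂P) * ∫ ω, φ₁ (τ j ω) ∂P := this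
          _ = 0 := by rw [hAjmean j]; ring
      calc ∫ ω, X j ω * Y k ω ∂P = (∫ ω, X j ω ∂P) * ∫ ω, Y k ω ∂P := hmul
        _ = 0 := by rw [hX0]; ring
  -- integrability and value of W n
  have hWexp : ∀ n, W n = fun ω => ∑ j ∈ Finset.range n, ∑ k ∈ Finset.range n,
      X j ω * Y k ω := by
    intro n; funext ω; simp only [hWdef]; rw [Finset.sum_mul_sum]
  have hWint : ∀ n, Integrable (W n) P := by
    intro n
    rw [hWexp n]
    exact integrable_finset_sum _ fun j _ => integrable_finset_sum _ fun k _ => hprod_int j k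
  have hWval : ∀ n, ∫ ω, W n ω ∂P = (n:ℝ) * (σA^2 * c) := by
    intro n
    rw [hWexp n]
    rw [integral_finset_sum _ fun j _ => integrable_finset_sum _ fun k _ => hprod_int j k]
    have : ∀ j ∈ Finset.range n,
        ∫ ω, (∑ k ∈ Finset.range n, X j ω * Y k ω) ∂P = σA^2 * c := by
      intro j hj
      rw [integral_finset_sum _ fun k _ => hprod_int j k]
      have : ∀ k ∈ Finset.range n, ∫ ω, X j ω * Y k ω ∂P
          = if j = k then σA^2 * c else 0 := fun k _ => hprod_val j k
      rw [Finset.sum_congr rfl this, Finset.sum_ite_eq, if_pos hj]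
    rw [Finset.sum_congr rfl this, Finset.sum_const, Finset.card_range, nsmul_eq_mul]
  -- bound for ∫ |W n|
  set D : ℝ := C₁*C₂*σA^2 with hDdef
  have hD0 : 0 ≤ D := by
    have : (0:ℝ) ≤ σA^2 := sq_nonneg _
    positivity
  have hWabs : ∀ n, ∫ ω, |W n ω| ∂P ≤ (n:ℝ)^2 * D := by
    intro n
    have hptbd : ∀ ω, |W n ω| ≤ ∑ j ∈ Finset.range n, ∑ k ∈ Finset.range n,
        (C₁*C₂/2)*((A j ω)^2+(A k ω)^2) := by
      intro ω
      have h1 : |W n ω| ≤ (∑ j ∈ Finset.range n, |X j ω|) * ∑ k ∈ Finset.range n, |Y k ω| := by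
        simp only [hWdef]
        rw [abs_mul]
        exact mul_le_mul (Finset.abs_sum_le_sum_abs _ _) (Finset.abs_sum_le_sum_abs _ _)
          (abs_nonneg _) (Finset.sum_nonneg fun _ _ => abs_nonneg _)
      rw [Finset.sum_mul_sum] at h1
      refine h1.trans (Finset.sum_le_sum fun j _ => Finset.sum_le_sum fun k _ => ?_)
      rw [← abs_mul]
      exact hprodbd j k ω
    have hint : Integrable (fun ω => ∑ j ∈ Finset.range n, ∑ k ∈ Finset.range n,
        (C₁*C₂/2)*((A j ω)^2+(A k ω)^2)) P :=
      integrable_finset_sum _ fun j _ => integrable_finset_sum _ fun k _ => hBint j k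
    calc ∫ ω, |W n ω| ∂P
        ≤ ∫ ω, (∑ j ∈ Finset.range n, ∑ k ∈ Finset.range n,
            (C₁*C₂/2)*((A j ω)^2+(A k ω)^2)) ∂P :=
          integral_mono_of_nonneg (Filter.Eventually.of_forall fun ω => abs_nonneg _)
            hint (Filter.Eventually.of_forall hptbd)
      _ = ∑ j ∈ Finset.range n, ∑ k ∈ Finset.range n, (C₁*C₂*σA^2) := by
          rw [integral_finset_sum _ fun j _ => integrable_finset_sum _ fun k _ => hBint j k]
          exact Finset.sum_congr rfl fun j _ => by
            rw [integral_finset_sum _ fun k _ => hBint j k]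
            exact Finset.sum_congr rfl fun k _ => hBval j k
      _ = (n:ℝ)^2 * D := by
          simp only [Finset.sum_const, Finset.card_range, nsmul_eq_mul, hDdef]
          ring
  -- independence of e n and W n
  have hKW : ∀ n, IndepFun (fun ω => (K ω : ℝ)) (W n) P := by
    intro n
    set S : Finset (Unit ⊕ ℕ ⊕ ℕ) := {Sum.inl ()} with hS
    set Tn : Finset (Unit ⊕ ℕ ⊕ ℕ) :=
      ((Finset.range n).image (Sum.inr ∘ Sum.inl)) ∪ ((Finset.range n).image (Sum.inr ∘ Sum.inr))
      with hTn
    have hdisj : Disjoint S Tn := by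
      rw [Finset.disjoint_left]
      rintro a ha hb
      simp only [hS, Finset.mem_singleton] at ha
      subst ha
      simp [hTn] at hb
    have base := hindep.indepFun_finset S Tn hdisj hFm
    have mem₁ : ∀ k : {x // x ∈ Finset.range n}, Sum.inr (Sum.inl k.1) ∈ Tn := fun k =>
      Finset.mem_union_left _ (Finset.mem_image_of_mem _ k.2)
    have mem₂ : ∀ k : {x // x ∈ Finset.range n}, Sum.inr (Sum.inr k.1) ∈ Tn := fun k =>
      Finset.mem_union_right _ (Finset.mem_image_of_mem _ k.2)
    set gS : (∀ _ : S, ℝ) → ℝ := fun v => v ⟨Sum.inl (), Finset.mem_singleton_self _⟩ with hgS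
    set gT : (∀ _ : Tn, ℝ) → ℝ := fun v =>
      (∑ k ∈ (Finset.range n).attach, v ⟨Sum.inr (Sum.inr k.1), mem₂ k⟩
          * φ₁ (v ⟨Sum.inr (Sum.inl k.1), mem₁ k⟩))
      * (∑ k ∈ (Finset.range n).attach, v ⟨Sum.inr (Sum.inr k.1), mem₂ k⟩
          * φ₂ (v ⟨Sum.inr (Sum.inl k.1), mem₁ k⟩)) with hgT
    have hgSm : Measurable gS := measurable_pi_apply _
    have hgTm : Measurable gT := by
      apply Measurable.mul <;> apply Finset.measurable_sum <;> intro k _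
      · exact (measurable_pi_apply _).mul (hφ₁.comp (measurable_pi_apply _))
      · exact (measurable_pi_apply _).mul (hφ₂.comp (measurable_pi_apply _))
    have hcomp := base.comp hgSm hgTm
    convert hcomp using 1
    · rfl
    funext ω
    show W n ω = gT (fun i => F i.1 ω)
    rw [hgT]
    simp only [hWdef]
    congr 1
    · rw [← Finset.sum_attach (Finset.range n) (fun m => X m ω)]
      rfl
    · rw [← Finset.sum_attach (Finset.range n) (fun m => Y m ω)]
      rfl
  have hite_m : ∀ n : ℕ, Measurable (fun x : ℝ => if x = (n:ℝ) then (1:ℝ) else 0) := fun n =>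
    Measurable.ite measurableSet_eq measurable_const measurable_const
  have heW : ∀ n, IndepFun (e n) (W n) P := fun n =>
    (hKW n).comp (hite_m n) measurable_id
  have heWabs : ∀ n, IndepFun (e n) (fun ω => |W n ω|) P := fun n =>
    (hKW n).comp (hite_m n) continuous_abs.measurable
  have heint : ∀ n, Integrable (e n) P := fun n =>
    hbd _ 1 (hem n) (fun ω => by simp only [hedef]; split <;> simp)
  -- value of ∫ e n
  have heval : ∀ n, ∫ ω, e n ω ∂P = poissonPMFReal (lam * T) n := by
    intro n
    have h1 : e n = Set.indicator (K ⁻¹' {n}) (1 : Ω → ℝ) := by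
      funext ω
      simp only [hedef, Set.indicator, Set.mem_preimage, Set.mem_singleton_iff, Nat.cast_inj,
        Pi.one_apply]
    rw [h1, integral_indicator_one (hKm (measurableSet_singleton n))]
    have h2 : P (K ⁻¹' {n}) = Measure.map K P {n} :=
      (Measure.map_apply hKm (measurableSet_singleton n)).symm
    rw [measureReal_def, h2, hKdist]
    have h3 : poissonMeasure (lam * T) {n} = poissonPMF (lam * T) n :=
      by rw [poissonMeasure_singleton, ← poissonPMFReal_ofReal_eq_poissonPMF]; rfl
    rw [h3]
    show (ENNReal.ofReal (poissonPMFReal (lam * T) n)).toReal = _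
    rw [ENNReal.toReal_ofReal poissonPMFReal_nonneg]
  -- products with e n
  have heWint : ∀ n, Integrable (fun ω => e n ω * W n ω) P := fun n =>
    (heW n).integrable_mul (heint n) (hWint n)
  have heWval : ∀ n, ∫ ω, e n ω * W n ω ∂P
      = poissonPMFReal (lam * T) n * ((n:ℝ) * (σA^2 * c)) := by
    intro n
    have := (heW n).integral_fun_mul_eq_mul_integral (heint n).aestronglyMeasurable (hWint n).aestronglyMeasurable
    calc ∫ ω, e n ω * W n ω ∂P = (∫ ω, e n ω ∂P) * ∫ ω, W n ω ∂P := this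
      _ = _ := by rw [heval n, hWval n]
  have heWabsval : ∀ n, ∫ ω, e n ω * |W n ω| ∂P
      ≤ poissonPMFReal (lam * T) n * ((n:ℝ)^2 * D) := by
    intro n
    have := (heWabs n).integral_fun_mul_eq_mul_integral (heint n).aestronglyMeasurable (hWint n).abs.aestronglyMeasurable
    calc ∫ ω, e n ω * |W n ω| ∂P = (∫ ω, e n ω ∂P) * ∫ ω, |W n ω| ∂P := this
      _ = poissonPMFReal (lam * T) n * ∫ ω, |W n ω| ∂P := by rw [heval n]
      _ ≤ poissonPMFReal (lam * T) n * ((n:ℝ)^2 * D) :=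
          mul_le_mul_of_nonneg_left (hWabs n) poissonPMFReal_nonneg
  -- pointwise identity
  have hpt : (fun ω => (∑ k ∈ Finset.range (K ω), A k ω * φ₁ (τ k ω))
      * (∑ k ∈ Finset.range (K ω), A k ω * φ₂ (τ k ω)))
      = fun ω => ∑' n, e n ω * W n ω := by
    funext ω
    have hz : ∀ b, b ≠ K ω → e b ω * W b ω = 0 := by
      intro b hb
      have : (K ω : ℝ) ≠ (b : ℝ) := by
        simpa [Nat.cast_inj] using (Ne.symm hb)
      simp only [hedef, if_neg this, zero_mul]
    rw [tsum_eq_single (K ω) hz]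
    simp only [hedef, hWdef, hXdef, hYdef]
    simp
  -- nonnegativity helpers
  have habsprod : ∀ n ω, |e n ω * W n ω| = e n ω * |W n ω| := by
    intro n ω
    rw [abs_mul]
    congr 1
    simp only [hedef]
    split <;> simp
  -- summability of the bound
  have hsummable : Summable (fun n : ℕ => poissonPMFReal (lam * T) n * ((n:ℝ)^2 * D)) := by
    have := (cpn_psq_summable (lam * T)).mul_right D
    refine this.congr fun n => ?_
    ring
  -- swap integral and tsum
  have hswap : ∫ ω, (∑' n, e n ω * W n ω) ∂P = ∑' n, ∫ ω, e n ω * W n ω ∂P := by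
    refine integral_tsum (fun n => ((hem n).mul (hWm n)).aestronglyMeasurable) ?_
    have hlin : ∀ n : ℕ, ∫⁻ ω, ‖e n ω * W n ω‖₊ ∂P
        = ENNReal.ofReal (∫ ω, ‖e n ω * W n ω‖ ∂P) := fun n =>
      (ofReal_integral_norm_eq_lintegral_enorm (heWint n)).symm
    have hle : ∀ n : ℕ, ∫⁻ ω, ‖e n ω * W n ω‖₊ ∂P
        ≤ ENNReal.ofReal (poissonPMFReal (lam * T) n * ((n:ℝ)^2 * D)) := by
      intro n
      rw [hlin n]
      refine ENNReal.ofReal_le_ofReal ?_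
      have : ∫ ω, ‖e n ω * W n ω‖ ∂P = ∫ ω, e n ω * |W n ω| ∂P := by
        refine integral_congr_ae (Filter.Eventually.of_forall fun ω => ?_)
        show ‖e n ω * W n ω‖ = e n ω * |W n ω|
        rw [Real.norm_eq_abs]
        exact habsprod n ω
      rw [this]
      exact heWabsval n
    refine ne_of_lt ?_
    calc ∑' n, ∫⁻ ω, ‖e n ω * W n ω‖₊ ∂P
        ≤ ∑' n, ENNReal.ofReal (poissonPMFReal (lam * T) n * ((n:ℝ)^2 * D)) :=
          ENNReal.tsum_le_tsum hle
      _ = ENNReal.ofReal (∑' n, poissonPMFReal (lam * T) n * ((n:ℝ)^2 * D)) :=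
          (ENNReal.ofReal_tsum_of_nonneg
            (fun n => mul_nonneg poissonPMFReal_nonneg (by positivity)) hsummable).symm
      _ < ⊤ := ENNReal.ofReal_lt_top
  -- final assembly
  rw [hpt, hswap]
  have hsum : HasSum (fun n : ℕ => poissonPMFReal (lam * T) n * ((n:ℝ) * (σA^2 * c)))
      (((lam * T : ℝ≥0) : ℝ) * (σA^2 * c)) := by
    have h := (cpn_pmean (lam * T)).mul_right (σA^2 * c)
    have heq : (fun n : ℕ => ((n:ℝ) * poissonPMFReal (lam * T) n) * (σA^2 * c))
        = fun n : ℕ => poissonPMFReal (lam * T) n * ((n:ℝ) * (σA^2 * c)) := by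
      funext n; ring
    rwa [heq] at h
  have hfin : ∑' n, ∫ ω, e n ω * W n ω ∂P = ((lam * T : ℝ≥0) : ℝ) * (σA^2 * c) := by
    rw [tsum_congr heWval]
    exact hsum.tsum_eq
  rw [hfin]
  have hI : ∫ t in Set.Icc (0:ℝ) (T:ℝ), φ₁ t * φ₂ t
      = ∫ t in (0:ℝ)..(T:ℝ), φ₁ t * φ₂ t := by
    rw [intervalIntegral.integral_of_le (by positivity : (0:ℝ) ≤ (T:ℝ)),
      integral_Icc_eq_integral_Ioc]
  have hTne : (T:ℝ) ≠ 0 := ne_of_gt (by exact_mod_cast hT)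
  simp only [hcdef, hI]
  push_cast
  field_simp
end

section
/- Let λ > 0, let ν be a probability law on ℝ, and let M ≥ 1 be a natural number. If S₁, …, S_M are independent compound-Poisson random variables, each with rate λ/M and amplitude law ν, then S₁ + ⋯ + S_M has the same distribution as a compound-Poisson random variable with rate λ and amplitude law ν. In particular, every compound-Poisson random variable is infinitely divisible. -/
open MeasureTheory ProbabilityTheory
open scoped NNReal ENNReal

/-- The law of a compound-Poisson random variable `Σ_{k=1}^N A_k` with rate `lam` and
amplitude law `ν`: first draw `n` from a Poisson(`lam`) law, then return the law of the
sum of `n` i.i.d. draws from `ν`. -/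
noncomputable def compoundPoissonMeasure (lam : ℝ≥0) (ν : Measure ℝ) : Measure ℝ :=
  (poissonMeasure lam).bind
    (fun n => Measure.map (fun x : Fin n → ℝ => ∑ i, x i) (Measure.pi (fun _ : Fin n => ν)))

namespace CPNaux

/-- The law of the sum of `n` i.i.d. draws from `ν`. -/
noncomputable def sumLaw (ν : Measure ℝ) (n : ℕ) : Measure ℝ :=
  Measure.map (fun x : Fin n → ℝ => ∑ i, x i) (Measure.pi (fun _ : Fin n => ν))

lemma measurable_finSum (n : ℕ) : Measurable (fun x : Fin n → ℝ => ∑ i, x i) :=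
  Finset.measurable_sum _ (fun i _ => measurable_pi_apply i)

instance (ν : Measure ℝ) [IsProbabilityMeasure ν] (n : ℕ) :
    IsProbabilityMeasure (sumLaw ν n) :=
  Measure.isProbabilityMeasure_map (measurable_finSum n).aemeasurable

lemma poissonPMF_apply (r : ℝ≥0) (n : ℕ) :
    poissonPMF r n = ENNReal.ofReal (poissonPMFReal r n) := rfl

lemma cpm_eq (lam : ℝ≥0) (ν : Measure ℝ) [IsProbabilityMeasure ν] :
    compoundPoissonMeasure lam ν = Measure.sum (fun n => poissonPMF lam n • sumLaw ν n) := by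
  ext s hs
  rw [compoundPoissonMeasure, Measure.bind_apply hs measurable_from_top.aemeasurable,
    lintegral_countable', Measure.sum_apply _ hs]
  refine tsum_congr fun n => ?_
  rw [Measure.smul_apply, smul_eq_mul, mul_comm]
  congr 1
  rw [poissonMeasure_singleton, poissonPMF_apply, poissonPMFReal]

lemma cpm_zero (ν : Measure ℝ) [IsProbabilityMeasure ν] :
    compoundPoissonMeasure 0 ν = Measure.dirac 0 := by
  rw [cpm_eq]
  ext s hs
  rw [Measure.sum_apply _ hs, tsum_eq_single 0 ?_]
  · have h0 : poissonPMF (0 : ℝ≥0) 0 = 1 := by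
      simp [poissonPMF_apply, poissonPMFReal]
    have hs0 : sumLaw ν 0 = Measure.dirac 0 := by
      rw [sumLaw]
      have : (fun x : Fin 0 → ℝ => ∑ i, x i) = fun _ => (0 : ℝ) := funext fun x => by simp
      rw [this, Measure.map_const]
      simp
    rw [h0, hs0, one_smul]
  · intro n hn
    have : poissonPMF (0 : ℝ≥0) n = 0 := by
      simp [poissonPMF_apply, poissonPMFReal, zero_pow hn]
    simp [this]

lemma sumLaw_conv (ν : Measure ℝ) [IsProbabilityMeasure ν] (n m : ℕ) :
    Measure.map (fun p : ℝ × ℝ => p.1 + p.2) ((sumLaw ν n).prod (sumLaw ν m))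
      = sumLaw ν (n + m) := by
  rw [sumLaw, sumLaw, Measure.map_prod_map _ _ (measurable_finSum n) (measurable_finSum m),
    Measure.map_map measurable_add ((measurable_finSum n).prodMap (measurable_finSum m))]
  -- left side: map over pi measure on `Fin n ⊕ Fin m` via the measurable equiv
  have h1 := (measurePreserving_sumPiEquivProdPi
      (X := fun _ : Fin n ⊕ Fin m => ℝ) (fun _ => ν)).map_eq
  rw [← h1, Measure.map_map
      (measurable_add.comp ((measurable_finSum n).prodMap (measurable_finSum m)))
      (MeasurableEquiv.sumPiEquivProdPi _).measurable]
  -- right side: pi measure on `Fin (n+m)` is the image of the pi measure on the sum type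
  have h2 := (measurePreserving_piCongrLeft (α := fun _ : Fin (n + m) => ℝ)
      (μ := fun _ : Fin (n + m) => ν) (finSumFinEquiv (m := n) (n := m))).map_eq
  rw [sumLaw, ← h2, Measure.map_map (measurable_finSum (n + m))
      (MeasurableEquiv.piCongrLeft _ _).measurable]
  refine congrFun (congrArg _ ?_) _
  funext y
  show (∑ i : Fin n, y (Sum.inl i)) + ∑ j : Fin m, y (Sum.inr j)
      = ∑ i : Fin (n + m),
          (MeasurableEquiv.piCongrLeft (fun _ : Fin (n + m) => ℝ) finSumFinEquiv) y i
  rw [← Equiv.sum_comp (finSumFinEquiv (m := n) (n := m))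
      (fun i => (MeasurableEquiv.piCongrLeft (fun _ : Fin (n + m) => ℝ) finSumFinEquiv) y i)]
  simp only [MeasurableEquiv.piCongrLeft_apply_apply]
  rw [Fintype.sum_sum_type]

lemma prod_smul_smul (c d : ℝ≥0∞) (μ ρ : Measure ℝ) [SFinite μ] [SFinite ρ] :
    (c • μ).prod (d • ρ) = (c * d) • (μ.prod ρ) := by
  ext s hs
  rw [Measure.prod_apply hs, Measure.smul_apply, Measure.prod_apply hs, smul_eq_mul,
    lintegral_smul_measure]
  simp only [Measure.smul_apply, smul_eq_mul]
  rw [lintegral_const_mul d (measurable_measure_prodMk_left hs)]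
  ring

lemma poissonPMFReal_antidiag (a b : ℝ≥0) (k : ℕ) :
    ∑ p ∈ Finset.HasAntidiagonal.antidiagonal k, poissonPMFReal a p.1 * poissonPMFReal b p.2
      = poissonPMFReal (a + b) k := by
  rw [Finset.Nat.sum_antidiagonal_eq_sum_range_succ_mk]
  unfold poissonPMFReal
  push_cast
  rw [neg_add, Real.exp_add, add_pow, Finset.mul_sum, Finset.sum_div]
  refine Finset.sum_congr rfl fun i hi => ?_
  have hik : i ≤ k := Nat.lt_succ_iff.mp (Finset.mem_range.mp hi)
  rw [Nat.cast_choose ℝ hik]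
  have h1 : (Nat.factorial i : ℝ) ≠ 0 := Nat.cast_ne_zero.mpr (Nat.factorial_ne_zero i)
  have h2 : (Nat.factorial (k - i) : ℝ) ≠ 0 := Nat.cast_ne_zero.mpr (Nat.factorial_ne_zero _)
  have h3 : (Nat.factorial k : ℝ) ≠ 0 := Nat.cast_ne_zero.mpr (Nat.factorial_ne_zero k)
  field_simp

lemma poisson_antidiag (a b : ℝ≥0) (k : ℕ) :
    ∑ p ∈ Finset.HasAntidiagonal.antidiagonal k, poissonPMF a p.1 * poissonPMF b p.2
      = poissonPMF (a + b) k := by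
  simp only [poissonPMF_apply]
  rw [← poissonPMFReal_antidiag a b k, ENNReal.ofReal_sum_of_nonneg (fun p _ =>
    mul_nonneg poissonPMFReal_nonneg poissonPMFReal_nonneg)]
  exact Finset.sum_congr rfl fun p _ => (ENNReal.ofReal_mul poissonPMFReal_nonneg).symm

lemma regroup (f : ℕ × ℕ → ℝ≥0∞) :
    ∑' p : ℕ × ℕ, f p = ∑' k : ℕ, ∑ p ∈ Finset.HasAntidiagonal.antidiagonal k, f p :=
  calc ∑' p : ℕ × ℕ, f p
      = ∑' x : Σ k : ℕ, {p // p ∈ Finset.HasAntidiagonal.antidiagonal k},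
          f ((Finset.HasAntidiagonal.sigmaAntidiagonalEquivProd (A := ℕ)) x) :=
        (Equiv.tsum_eq (Finset.HasAntidiagonal.sigmaAntidiagonalEquivProd (A := ℕ)) f).symm
    _ = ∑' (k : ℕ) (p : {p // p ∈ Finset.HasAntidiagonal.antidiagonal k}), f ↑p :=
        ENNReal.tsum_sigma' _
    _ = ∑' k : ℕ, ∑ p ∈ Finset.HasAntidiagonal.antidiagonal k, f p :=
        tsum_congr fun k => Finset.tsum_subtype _ f

lemma cpm_conv (a b : ℝ≥0) (ν : Measure ℝ) [IsProbabilityMeasure ν] :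
    Measure.map (fun p : ℝ × ℝ => p.1 + p.2)
      ((compoundPoissonMeasure a ν).prod (compoundPoissonMeasure b ν))
      = compoundPoissonMeasure (a + b) ν := by
  rw [cpm_eq a, cpm_eq b, cpm_eq (a + b), Measure.prod_sum,
    Measure.map_sum measurable_add.aemeasurable]
  have hterm : ∀ p : ℕ × ℕ,
      Measure.map (fun q : ℝ × ℝ => q.1 + q.2)
        ((poissonPMF a p.1 • sumLaw ν p.1).prod (poissonPMF b p.2 • sumLaw ν p.2))
        = (poissonPMF a p.1 * poissonPMF b p.2) • sumLaw ν (p.1 + p.2) := by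
    intro p
    rw [prod_smul_smul, Measure.map_smul, sumLaw_conv]
  ext s hs
  rw [Measure.sum_apply _ hs, Measure.sum_apply _ hs]
  simp only [hterm, Measure.smul_apply, smul_eq_mul]
  rw [regroup (fun p : ℕ × ℕ => poissonPMF a p.1 * poissonPMF b p.2 * sumLaw ν (p.1 + p.2) s)]
  refine tsum_congr fun k => ?_
  rw [show ∑ p ∈ Finset.HasAntidiagonal.antidiagonal k,
      poissonPMF a p.1 * poissonPMF b p.2 * sumLaw ν (p.1 + p.2) s
      = ∑ p ∈ Finset.HasAntidiagonal.antidiagonal k,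
          poissonPMF a p.1 * poissonPMF b p.2 * sumLaw ν k s from
    Finset.sum_congr rfl fun p hp => by rw [Finset.HasAntidiagonal.mem_antidiagonal.mp hp]]
  rw [← Finset.sum_mul, poisson_antidiag]

lemma indep_map_add {Ω : Type*} [MeasurableSpace Ω] (P : Measure Ω) [IsProbabilityMeasure P]
    {f g : Ω → ℝ} (hf : Measurable f) (hg : Measurable g) (h : IndepFun f g P) :
    Measure.map (fun ω => f ω + g ω) P
      = Measure.map (fun p : ℝ × ℝ => p.1 + p.2) ((Measure.map f P).prod (Measure.map g P)) := by
  rw [← (indepFun_iff_map_prod_eq_prod_map_map hf.aemeasurable hg.aemeasurable).mp h,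
    Measure.map_map measurable_add (hf.prodMk hg)]
  rfl

end CPNaux

/-- Infinite divisibility of compound-Poisson laws: the sum of `M` independent
compound-Poisson random variables, each of rate `λ/M` and amplitude law `ν`, is a
compound-Poisson random variable of rate `λ` and amplitude law `ν`. -/
theorem compound_poisson_infinitely_divisible {Ω : Type*} [MeasurableSpace Ω] (P : Measure Ω)
    [IsProbabilityMeasure P] (lam : ℝ≥0) (hlam : 0 < lam)
    (ν : Measure ℝ) [IsProbabilityMeasure ν] (M : ℕ) (hM : 1 ≤ M)
    (S : Fin M → Ω → ℝ) (hmeas : ∀ i, Measurable (S i))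
    (hindep : iIndepFun S P)
    (hdist : ∀ i, Measure.map (S i) P = compoundPoissonMeasure (lam / M) ν) :
    Measure.map (fun ω => ∑ i : Fin M, S i ω) P = compoundPoissonMeasure lam ν := by
  classical
  have key : ∀ s : Finset (Fin M),
      Measure.map (fun ω => ∑ i ∈ s, S i ω) P
        = compoundPoissonMeasure ((s.card : ℝ≥0) * (lam / M)) ν := by
    intro s
    induction s using Finset.cons_induction with
    | empty =>
        simp only [Finset.sum_empty, Finset.card_empty, Nat.cast_zero, zero_mul]
        rw [CPNaux.cpm_zero, Measure.map_const]
        simp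
    | cons a s ha ih =>
        have hsum_meas : Measurable (fun ω => ∑ i ∈ s, S i ω) :=
          Finset.measurable_sum _ (fun i _ => hmeas i)
        have hindep' : IndepFun (fun ω => ∑ i ∈ s, S i ω) (S a) P := by
          have h := hindep.indepFun_finset_sum_of_notMem hmeas ha
          have he : (∑ j ∈ s, S j) = fun ω => ∑ i ∈ s, S i ω :=
            funext fun ω => Finset.sum_apply ω s S
          rwa [he] at h
        have hfun : (fun ω => ∑ i ∈ Finset.cons a s ha, S i ω)
            = fun ω => (∑ i ∈ s, S i ω) + S a ω := by
          funext ω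
          rw [Finset.sum_cons]
          ring
        rw [hfun, CPNaux.indep_map_add P hsum_meas (hmeas a) hindep', ih, hdist a,
          CPNaux.cpm_conv]
        congr 1
        rw [Finset.card_cons]
        push_cast
        ring
  have hMne : ((M : ℝ≥0)) ≠ 0 := Nat.cast_ne_zero.mpr (by omega)
  have := key Finset.univ
  rw [Finset.card_univ, Fintype.card_fin] at this
  rw [show ((M : ℝ≥0)) * (lam / M) = lam by
    rw [mul_comm]; exact div_mul_cancel₀ lam hMne] at this
  exact this
end

section
/- Let h > 0, let M ≥ 1, let α₁, …, α_M ∈ ℂ, and let c₁, …, c_M ∈ ℂ. Define r₀, …, r_M ∈ ℂ as the coefficients of the polynomial ∏_{i=1}^{M} (1 − e^{α_i h} X) = Σ_{j=0}^{M} r_j X^j, and define ρ : ℝ → ℂ by ρ(t) = Σ_{i=1}^{M} c_i e^{α_i t} for t > 0 and ρ(t) = 0 for t ≤ 0. Then the function β(t) = Σ_{j=0}^{M} r_j ρ(t − jh) vanishes for every t ≤ 0 and for every t > Mh; i.e., the support of β is contained in [0, Mh]. -/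
open Polynomial Complex

/-- Compact support of the generalized B-spline `β = L_d^h{ρ}`: with
`ρ(t) = 𝟙_{t>0} ∑_i c_i e^{α_i t}` a causal sum of exponentials and `r_j` the coefficients
of `∏_{i=1}^M (1 - e^{α_i h} X)`, the function `β(t) = ∑_{j=0}^M r_j ρ(t - jh)` vanishes
for `t ≤ 0` and for `t > Mh`. -/
theorem bspline_compact_support (h : ℝ) (hh : 0 < h) (M : ℕ) (hM : 1 ≤ M)
    (α : Fin M → ℂ) (c : Fin M → ℂ)
    (r : ℕ → ℂ)
    (hr : ∀ j, r j = (∏ i : Fin M, (1 - Polynomial.C (Complex.exp (α i * h)) * Polynomial.X)).coeff j)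
    (ρ : ℝ → ℂ)
    (hρ : ∀ t : ℝ, ρ t = if 0 < t then ∑ i : Fin M, c i * Complex.exp (α i * t) else 0)
    (β : ℝ → ℂ)
    (hβ : ∀ t : ℝ, β t = ∑ j ∈ Finset.range (M + 1), r j * ρ (t - j * h)) :
    (∀ t : ℝ, t ≤ 0 → β t = 0) ∧ (∀ t : ℝ, M * h < t → β t = 0) := by
  set P : Polynomial ℂ :=
    ∏ i : Fin M, (1 - Polynomial.C (Complex.exp (α i * h)) * Polynomial.X) with hP
  have hdeg : P.natDegree < M + 1 := by
    have : P.natDegree ≤ ∑ i : Fin M,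
        (1 - Polynomial.C (Complex.exp (α i * h)) * Polynomial.X).natDegree :=
      Polynomial.natDegree_prod_le _ _
    have h2 : ∀ i : Fin M,
        (1 - Polynomial.C (Complex.exp (α i * h)) * Polynomial.X).natDegree ≤ 1 := by
      intro i
      compute_degree
    have h3 : (∑ i : Fin M,
        (1 - Polynomial.C (Complex.exp (α i * h)) * Polynomial.X).natDegree) ≤ M := by
      calc _ ≤ ∑ _i : Fin M, 1 := Finset.sum_le_sum fun i _ => h2 i
        _ = M := by simp
    omega
  constructor
  · intro t ht
    rw [hβ]
    apply Finset.sum_eq_zero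
    intro j hj
    have hjh : (0:ℝ) ≤ (j : ℝ) * h := by positivity
    have : ¬ (0 < t - (j : ℝ) * h) := by push_neg; linarith
    rw [hρ]
    simp [this]
  · intro t ht
    rw [hβ]
    have hpos : ∀ j ∈ Finset.range (M + 1), 0 < t - (j : ℝ) * h := by
      intro j hj
      have hjM : (j : ℝ) ≤ M := by
        exact_mod_cast Nat.lt_succ_iff.mp (Finset.mem_range.mp hj)
      nlinarith
    calc ∑ j ∈ Finset.range (M + 1), r j * ρ (t - j * h)
        = ∑ j ∈ Finset.range (M + 1), ∑ i : Fin M,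
            P.coeff j * (c i * Complex.exp (α i * t)) * (Complex.exp (-(α i * h))) ^ j := by
          apply Finset.sum_congr rfl
          intro j hj
          rw [hρ, if_pos (hpos j hj), hr, Finset.mul_sum]
          apply Finset.sum_congr rfl
          intro i _
          have hexp : Complex.exp (α i * ((t : ℂ) - (j : ℂ) * (h : ℂ))) =
              Complex.exp (α i * (t : ℂ)) * Complex.exp (-(α i * (h : ℂ))) ^ j := by
            rw [← Complex.exp_nat_mul, ← Complex.exp_add]
            ring_nf
          push_cast
          rw [hexp]
          ring
      _ = ∑ i : Fin M, (c i * Complex.exp (α i * t)) *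
            ∑ j ∈ Finset.range (M + 1), P.coeff j * (Complex.exp (-(α i * h))) ^ j := by
          rw [Finset.sum_comm]
          apply Finset.sum_congr rfl
          intro i _
          rw [Finset.mul_sum]
          apply Finset.sum_congr rfl
          intro j _
          ring
      _ = 0 := by
          apply Finset.sum_eq_zero
          intro i _
          have heval : P.eval (Complex.exp (-(α i * h))) =
              ∑ j ∈ Finset.range (M + 1), P.coeff j * (Complex.exp (-(α i * h))) ^ j :=
            Polynomial.eval_eq_sum_range' hdeg _
          rw [← heval, hP, Polynomial.eval_prod]
          rw [Finset.prod_eq_zero (Finset.mem_univ i)]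
          · ring
          · simp [← Complex.exp_add]
end
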